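/- Let G be a connected finite simple graph on n vertices, β := β(G), and r_G := β^{dia(G)}/(2n). Then for every complex z with |z − β| < r_G, the derivative of the independence polynomial satisfies |I'(G, z)| ≤ 2·|I'(G, β)|. -/

import Mathlib

open Polynomial

open scoped Classical in
/-- `indPolyOn G A` is the independence polynomial (over `ℝ`) of the subgraph of `G`
induced on the vertex set `A`: the sum of `(-1)^|s| • X^|s|` over all independent
sets `s ⊆ A` of `G`.  Equivalently it is `∑ k (-1)^k a_k z^k` where `a_k` is the
number of independent sets of size `k` of the induced subgraph `G[A]`. -/
noncomputable def indPolyOn {V : Type*} [Fintype V] (G : SimpleGraph V) (A : Set V) :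
    Polynomial ℝ :=
  ∑ s ∈ Finset.univ.filter
      (fun s : Finset V => ↑s ⊆ A ∧ ∀ u ∈ s, ∀ v ∈ s, ¬ G.Adj u v),
    ((-1 : ℝ) ^ s.card) • (X : Polynomial ℝ) ^ s.card

/-- The independence polynomial `I(G,z)` of `G`. -/
noncomputable def indPoly {V : Type*} [Fintype V] (G : SimpleGraph V) : Polynomial ℝ :=
  indPolyOn G Set.univ

namespace IndProof

open Finset SimpleGraph
open scoped Classical

variable {V : Type*} [Fintype V] (G : SimpleGraph V)

def ind (s : Finset V) : Prop := ∀ u ∈ s, ∀ v ∈ s, ¬ G.Adj u v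

noncomputable def SA (A : Finset V) : Finset (Finset V) :=
  Finset.univ.filter (fun s : Finset V => s ⊆ A ∧ ind G s)

noncomputable def P (A : Finset V) : Polynomial ℝ :=
  ∑ s ∈ SA G A, ((-1 : ℝ) ^ s.card) • (X : Polynomial ℝ) ^ s.card

noncomputable def Nv (v : V) : Finset V :=
  Finset.univ.filter (fun u => u = v ∨ G.Adj v u)

lemma mem_SA {A s : Finset V} : s ∈ SA G A ↔ s ⊆ A ∧ ind G s := by
  simp [SA]

lemma mem_Nv {v u : V} : u ∈ Nv G v ↔ u = v ∨ G.Adj v u := by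
  simp [Nv]

lemma indPolyOn_eq (A : Finset V) : indPolyOn G ↑A = P G A := by
  unfold indPolyOn P SA ind
  apply Finset.sum_congr
  · ext s
    simp [Finset.coe_subset]
  · intros; rfl

lemma indPoly_eq : indPoly G = P G Finset.univ := by
  rw [indPoly, ← Finset.coe_univ, indPolyOn_eq]

lemma sum_insert_bij {M : Type*} [AddCommMonoid M] {A : Finset V} {v : V} (hv : v ∈ A)
    (F : Finset V → M) :
    ∑ s ∈ SA G (A \ Nv G v), F (insert v s)
      = ∑ s ∈ (SA G A).filter (fun s => v ∈ s), F s := by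
  refine Finset.sum_nbij' (fun s => insert v s) (fun s => s.erase v) ?_ ?_ ?_ ?_ ?_
  · intro s hs
    rw [mem_SA] at hs
    obtain ⟨hsub, hind⟩ := hs
    have hvs : v ∉ s := fun h => by
      have := hsub h
      rw [Finset.mem_sdiff, mem_Nv] at this
      exact this.2 (Or.inl rfl)
    rw [Finset.mem_filter, mem_SA]
    refine ⟨⟨?_, ?_⟩, Finset.mem_insert_self v s⟩
    · intro u hu
      rcases Finset.mem_insert.mp hu with rfl | hu
      · exact hv
      · exact (Finset.mem_sdiff.mp (hsub hu)).1
    · intro a ha b hb h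
      rcases Finset.mem_insert.mp ha with ha' | ha' <;>
        rcases Finset.mem_insert.mp hb with hb' | hb'
      · exact G.irrefl (ha' ▸ hb' ▸ h)
      · have := hsub hb'
        rw [Finset.mem_sdiff, mem_Nv] at this
        exact this.2 (Or.inr (ha' ▸ h))
      · have := hsub ha'
        rw [Finset.mem_sdiff, mem_Nv] at this
        exact this.2 (Or.inr (hb' ▸ h.symm))
      · exact hind a ha' b hb' h
  · intro s hs
    rw [Finset.mem_filter, mem_SA] at hs
    obtain ⟨⟨hsub, hind⟩, hvs⟩ := hs
    rw [mem_SA]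
    constructor
    · intro u hu
      have hus : u ∈ s := Finset.mem_of_mem_erase hu
      rw [Finset.mem_sdiff, mem_Nv]
      refine ⟨hsub hus, ?_⟩
      rintro (rfl | hadj)
      · exact (Finset.notMem_erase u s) hu
      · exact hind v hvs u hus hadj
    · intro a ha b hb
      exact hind a (Finset.mem_of_mem_erase ha) b (Finset.mem_of_mem_erase hb)
  · intro s hs
    rw [mem_SA] at hs
    have hvs : v ∉ s := fun h => by
      have := hs.1 h
      rw [Finset.mem_sdiff, mem_Nv] at this
      exact this.2 (Or.inl rfl)
    rw [Finset.erase_insert hvs]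
  · intro s hs
    rw [Finset.mem_filter] at hs
    rw [Finset.insert_erase hs.2]
  · intro s hs
    rfl

lemma card_SA_insert {A s : Finset V} {v : V} (hs : s ∈ SA G (A \ Nv G v)) :
    (insert v s).card = s.card + 1 := by
  rw [mem_SA] at hs
  have hvs : v ∉ s := fun h => by
    have := hs.1 h
    rw [Finset.mem_sdiff, mem_Nv] at this
    exact this.2 (Or.inl rfl)
  rw [Finset.card_insert_of_notMem hvs]

lemma P_del {A : Finset V} {v : V} (hv : v ∈ A) :
    P G A = P G (A.erase v) - X * P G (A \ Nv G v) := by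
  have h1 : (SA G A).filter (fun s => ¬ v ∈ s) = SA G (A.erase v) := by
    ext s
    simp only [Finset.mem_filter, mem_SA, Finset.subset_erase]
    tauto
  have h2 : ∑ s ∈ (SA G A).filter (fun s => v ∈ s),
      ((-1 : ℝ) ^ s.card) • (X : Polynomial ℝ) ^ s.card
      = -(X * P G (A \ Nv G v)) := by
    rw [← sum_insert_bij G hv (fun s => ((-1 : ℝ) ^ s.card) • (X : Polynomial ℝ) ^ s.card),
      P, Finset.mul_sum, ← Finset.sum_neg_distrib]
    apply Finset.sum_congr rfl
    intro s hs
    rw [card_SA_insert G hs, pow_succ, pow_succ, smul_eq_C_mul, smul_eq_C_mul, C_mul, C_neg,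
      C_1]
    ring
  have h0 : P G A = ∑ s ∈ (SA G A).filter (fun s => v ∈ s),
        ((-1 : ℝ) ^ s.card) • (X : Polynomial ℝ) ^ s.card
      + ∑ s ∈ (SA G A).filter (fun s => ¬ v ∈ s),
        ((-1 : ℝ) ^ s.card) • (X : Polynomial ℝ) ^ s.card := by
    rw [Finset.sum_filter_add_sum_filter_not]
    rfl
  rw [h0, h1, h2]
  have : P G (A.erase v) = ∑ s ∈ SA G (A.erase v),
      ((-1 : ℝ) ^ s.card) • (X : Polynomial ℝ) ^ s.card := rfl
  rw [← this]
  ring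

lemma deriv_P (A : Finset V) :
    derivative (P G A) = -∑ v ∈ A, P G (A \ Nv G v) := by
  have hterm : ∀ s ∈ SA G A, derivative (((-1 : ℝ) ^ s.card) • (X : Polynomial ℝ) ^ s.card)
      = -(s.card • (((-1 : ℝ) ^ (s.card - 1)) • (X : Polynomial ℝ) ^ (s.card - 1))) := by
    intro s _
    rw [derivative_smul, derivative_X_pow]
    rcases Nat.eq_zero_or_pos s.card with h0 | hpos
    · simp [h0]
    · obtain ⟨k, hk⟩ := Nat.exists_eq_add_of_le hpos
      have hk' : s.card = k + 1 := by omega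
      rw [hk']
      simp only [Nat.add_sub_cancel]
      rw [smul_eq_C_mul, smul_eq_C_mul, nsmul_eq_mul, ← C_eq_natCast]
      push_cast
      rw [pow_succ]
      rw [C_mul, C_neg, C_1]
      ring
  have hF : ∀ v ∈ A, P G (A \ Nv G v)
      = ∑ s ∈ (SA G A).filter (fun s => v ∈ s),
          ((-1 : ℝ) ^ (s.card - 1)) • (X : Polynomial ℝ) ^ (s.card - 1) := by
    intro v hv
    rw [← sum_insert_bij G hv
      (fun s => ((-1 : ℝ) ^ (s.card - 1)) • (X : Polynomial ℝ) ^ (s.card - 1))]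
    apply Finset.sum_congr rfl
    intro s hs
    rw [card_SA_insert G hs]
    simp
  rw [P, derivative_sum]
  rw [Finset.sum_congr rfl hterm, Finset.sum_congr rfl hF]
  rw [← Finset.sum_neg_distrib]
  have hswap : ∑ v ∈ A, ∑ s ∈ (SA G A).filter (fun s => v ∈ s),
      ((-1 : ℝ) ^ (s.card - 1)) • (X : Polynomial ℝ) ^ (s.card - 1)
      = ∑ s ∈ SA G A, s.card • (((-1 : ℝ) ^ (s.card - 1)) • (X : Polynomial ℝ) ^ (s.card - 1)) := by
    have h1 : ∀ v ∈ A, ∑ s ∈ (SA G A).filter (fun s => v ∈ s),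
        ((-1 : ℝ) ^ (s.card - 1)) • (X : Polynomial ℝ) ^ (s.card - 1)
        = ∑ s ∈ SA G A, if v ∈ s then
            ((-1 : ℝ) ^ (s.card - 1)) • (X : Polynomial ℝ) ^ (s.card - 1) else 0 := by
      intro v _
      rw [Finset.sum_filter]
    rw [Finset.sum_congr rfl h1, Finset.sum_comm]
    apply Finset.sum_congr rfl
    intro s hs
    have hsub : s ⊆ A := (mem_SA G |>.mp hs).1
    rw [Finset.sum_ite_mem]
    rw [Finset.sum_const]
    congr 1
    rw [Finset.inter_eq_right.mpr hsub]
  rw [Finset.sum_neg_distrib, ← hswap]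
  exact (Finset.sum_neg_distrib ..).symm

lemma evalP_eq (A : Finset V) (x : ℝ) :
    (P G A).eval x = ∑ s ∈ SA G A, (-1 : ℝ) ^ s.card * x ^ s.card := by
  rw [P, eval_finset_sum]
  apply Finset.sum_congr rfl
  intro s _
  rw [eval_smul, eval_pow, eval_X, smul_eq_mul]

lemma empty_mem_SA (A : Finset V) : ∅ ∈ SA G A := by
  rw [mem_SA]
  exact ⟨Finset.empty_subset _, by intro u hu; simp at hu⟩

lemma one_le_evalP_nonpos (A : Finset V) {x : ℝ} (hx : x ≤ 0) : 1 ≤ (P G A).eval x := by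
  rw [evalP_eq]
  have h2 : ∀ s ∈ SA G A, (0:ℝ) ≤ (-1 : ℝ) ^ s.card * x ^ s.card := by
    intro s _
    rw [← neg_pow]
    exact pow_nonneg (neg_nonneg.mpr hx) _
  have := Finset.single_le_sum h2 (empty_mem_SA G A)
  simpa using this

lemma evalP_zero (A : Finset V) : (P G A).eval 0 = 1 := by
  rw [evalP_eq]
  rw [Finset.sum_eq_single ∅]
  · simp
  · intro s _ hne
    have : s.card ≠ 0 := by simpa using hne
    rw [zero_pow this, mul_zero]
  · intro h
    exact absurd (empty_mem_SA G A) h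

lemma eval_P_del {A : Finset V} {v : V} (hv : v ∈ A) (x : ℝ) :
    (P G A).eval x = (P G (A.erase v)).eval x - x * (P G (A \ Nv G v)).eval x := by
  rw [P_del G hv]
  simp [eval_sub, eval_mul]

lemma nonneg_of_left_pos {g : Polynomial ℝ} {y : ℝ} (hy : 0 < y)
    (h : ∀ t, 0 ≤ t → t < y → 0 < g.eval t) : 0 ≤ g.eval y := by
  have hc : Filter.Tendsto (fun t => g.eval t) (nhdsWithin y (Set.Iio y)) (nhds (g.eval y)) :=
    (g.continuous.tendsto y).mono_left nhdsWithin_le_nhds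
  refine ge_of_tendsto hc ?_
  filter_upwards [Ioo_mem_nhdsLT hy] with t ht
  exact (h t ht.1.le ht.2).le

lemma sdiff_Nv_subset_erase (A : Finset V) (v : V) : A \ Nv G v ⊆ A.erase v := by
  intro u hu
  rw [Finset.mem_sdiff] at hu
  rw [Finset.mem_erase]
  exact ⟨fun h => hu.2 (mem_Nv G |>.mpr (Or.inl h)), hu.1⟩

lemma key_pos : ∀ (k : ℕ), ∀ (B : Finset V), B.card ≤ k → ∀ x : ℝ, 0 ≤ x →
    (∀ t, 0 ≤ t → t ≤ x → 0 < (P G B).eval t) →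
    ∀ A ⊆ B, ∀ t, 0 ≤ t → t ≤ x → 0 < (P G A).eval t := by
  intro k
  induction k with
  | zero =>
    intro B hBk x hx hB A hAB t ht htx
    have hB0 : B = ∅ := Finset.card_eq_zero.mp (Nat.le_zero.mp hBk)
    have hA0 : A = B := by
      rw [hB0] at hAB ⊢
      exact Finset.subset_empty.mp hAB
    rw [hA0]
    exact hB t ht htx
  | succ k IH =>
    intro B hBk x hx hB A hAB t ht htx
    by_cases hABeq : A = B
    · rw [hABeq]; exact hB t ht htx
    · obtain ⟨v, hvB, hvA⟩ := Finset.exists_of_ssubset (hAB.ssubset_of_ne hABeq)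
      have hcard : (B.erase v).card ≤ k := by
        rw [Finset.card_erase_of_mem hvB]
        omega
      have herase : ∀ s, 0 ≤ s → s ≤ x → 0 < (P G (B.erase v)).eval s := by
        by_contra hcon
        push_neg at hcon
        obtain ⟨s₀, hs₀0, hs₀x, hs₀⟩ := hcon
        set S : Set ℝ := Set.Icc 0 x ∩ (fun t => (P G (B.erase v)).eval t) ⁻¹' Set.Iic 0
          with hS
        have hSne : S.Nonempty := ⟨s₀, ⟨hs₀0, hs₀x⟩, hs₀⟩
        have hSclosed : IsClosed S :=
          IsClosed.inter isClosed_Icc (IsClosed.preimage (Polynomial.continuous _) isClosed_Iic)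
        have hSbdd : BddBelow S := ⟨0, fun u hu => hu.1.1⟩
        set y := sInf S with hy
        have hyS : y ∈ S := hSclosed.csInf_mem hSne hSbdd
        have hy0 : 0 ≤ y := hyS.1.1
        have hyx : y ≤ x := hyS.1.2
        have hyf : (P G (B.erase v)).eval y ≤ 0 := hyS.2
        have hlt : ∀ u, 0 ≤ u → u < y → 0 < (P G (B.erase v)).eval u := by
          intro u hu0 huy
          by_contra h'
          push_neg at h'
          have huS : u ∈ S := ⟨⟨hu0, le_trans huy.le hyx⟩, h'⟩
          have := csInf_le hSbdd huS
          rw [← hy] at this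
          linarith
        have hypos : 0 < y := by
          rcases lt_or_eq_of_le hy0 with h | h
          · exact h
          · exfalso
            rw [← h] at hyf
            rw [evalP_zero] at hyf
            linarith
        have hPB : 0 < (P G B).eval y := hB y hy0 hyx
        have hid := eval_P_del G hvB y
        have hneg : (P G (B \ Nv G v)).eval y < 0 := by nlinarith
        have hQpos : ∀ u, 0 ≤ u → u < y → 0 < (P G (B \ Nv G v)).eval u := by
          intro u hu0 huy
          exact IH (B.erase v) hcard u hu0
            (fun s hs0 hsu => hlt s hs0 (lt_of_le_of_lt hsu huy))
            (B \ Nv G v) (sdiff_Nv_subset_erase G B v) u hu0 le_rfl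
        have := nonneg_of_left_pos hypos hQpos
        linarith
      have hAB' : A ⊆ B.erase v := by
        intro u hu
        rw [Finset.mem_erase]
        exact ⟨fun h => hvA (h ▸ hu), hAB hu⟩
      exact IH (B.erase v) hcard x hx herase A hAB' t ht htx

noncomputable def NU (U : Finset V) : Finset V := U.biUnion (Nv G)

lemma sdiff_NU_insert (U : Finset V) (v : V) :
    (Finset.univ \ NU G U) \ Nv G v = Finset.univ \ NU G (insert v U) := by
  ext u
  simp only [Finset.mem_sdiff, NU, Finset.mem_biUnion, Finset.mem_univ, true_and,
    Finset.mem_insert]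
  constructor
  · rintro ⟨h1, h2⟩
    rintro ⟨a, (rfl | ha), hNa⟩
    · exact h2 hNa
    · exact h1 ⟨a, ha, hNa⟩
  · intro h
    constructor
    · rintro ⟨a, ha, hNa⟩
      exact h ⟨a, Or.inr ha, hNa⟩
    · intro hNv
      exact h ⟨v, Or.inl rfl, hNv⟩


section Beta

variable {β : ℝ}

lemma beta_pos (hβroot : (P G Finset.univ).eval β = 0) : 0 < β := by
  by_contra h
  push_neg at h
  have := one_le_evalP_nonpos G Finset.univ h
  linarith

lemma univ_pos (hβmin : ∀ x : ℝ, (P G Finset.univ).eval x = 0 → β ≤ x) :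
    ∀ t, 0 ≤ t → t < β → 0 < (P G Finset.univ).eval t := by
  intro t ht htβ
  by_contra h
  push_neg at h
  have hiv : (0 : ℝ) ∈ Set.Icc ((P G Finset.univ).eval t) ((P G Finset.univ).eval 0) := by
    constructor
    · exact h
    · rw [evalP_zero]; norm_num
  have := intermediate_value_Icc' ht ((P G Finset.univ).continuous.continuousOn
    (s := Set.Icc 0 t)) hiv
  obtain ⟨c, hc, hceval⟩ := this
  have := hβmin c hceval
  have := hc.2
  linarith

lemma posA (hβmin : ∀ x : ℝ, (P G Finset.univ).eval x = 0 → β ≤ x) (A : Finset V) :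
    ∀ t, 0 ≤ t → t < β → 0 < (P G A).eval t := by
  intro t ht htβ
  exact key_pos G (Finset.univ : Finset V).card Finset.univ le_rfl t ht
    (fun s hs0 hst => univ_pos G hβmin s hs0 (lt_of_le_of_lt hst htβ))
    A (Finset.subset_univ A) t ht le_rfl

variable (hβroot : (P G Finset.univ).eval β = 0)
  (hβmin : ∀ x : ℝ, (P G Finset.univ).eval x = 0 → β ≤ x)
include hβroot hβmin

lemma nonnegA (A : Finset V) : 0 ≤ (P G A).eval β :=
  nonneg_of_left_pos (beta_pos G hβroot) (posA G hβmin A)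

lemma monoA : ∀ (k : ℕ) (B : Finset V), B.card ≤ k → ∀ A ⊆ B,
    (P G B).eval β ≤ (P G A).eval β := by
  intro k
  induction k with
  | zero =>
    intro B hBk A hAB
    have hB0 : B = ∅ := Finset.card_eq_zero.mp (Nat.le_zero.mp hBk)
    rw [hB0] at hAB
    rw [Finset.subset_empty.mp hAB, hB0]
  | succ k IH =>
    intro B hBk A hAB
    by_cases hABeq : A = B
    · rw [hABeq]
    · obtain ⟨v, hvB, hvA⟩ := Finset.exists_of_ssubset (hAB.ssubset_of_ne hABeq)
      have hcard : (B.erase v).card ≤ k := by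
        rw [Finset.card_erase_of_mem hvB]; omega
      have h1 : (P G B).eval β ≤ (P G (B.erase v)).eval β := by
        rw [eval_P_del G hvB]
        have h2 := nonnegA G hβroot hβmin (B \ Nv G v)
        have h3 := (beta_pos G hβroot).le
        nlinarith
      have hAB' : A ⊆ B.erase v := fun u hu =>
        Finset.mem_erase.mpr ⟨fun h => hvA (h ▸ hu), hAB hu⟩
      exact le_trans h1 (IH (B.erase v) hcard A hAB')

lemma monoA' {A B : Finset V} (hAB : A ⊆ B) : (P G B).eval β ≤ (P G A).eval β :=
  monoA G hβroot hβmin B.card B le_rfl A hAB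

lemma SL2 {A : Finset V} {v : V} (hv : v ∈ A) :
    β * (P G (A \ Nv G v)).eval β ≤ (P G (A.erase v)).eval β := by
  have hid := eval_P_del G hv β
  have h0 := nonnegA G hβroot hβmin A
  linarith

lemma SL1 {A : Finset V} {w y : V} (hw : w ∉ A) (hadj : G.Adj w y) (hy : y ∈ A) :
    β * (P G (A.erase y)).eval β ≤ (P G A).eval β := by
  have hwB : w ∈ insert w A := Finset.mem_insert_self w A
  have hid := eval_P_del G hwB β
  rw [Finset.erase_insert hw] at hid
  have h0 := nonnegA G hβroot hβmin (insert w A)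
  have hsub : (insert w A) \ Nv G w ⊆ A.erase y := by
    intro u hu
    rw [Finset.mem_sdiff] at hu
    obtain ⟨hu1, hu2⟩ := hu
    rw [Finset.mem_erase]
    constructor
    · intro h
      exact hu2 (mem_Nv G |>.mpr (Or.inr (h ▸ hadj)))
    · rcases Finset.mem_insert.mp hu1 with h | h
      · exact absurd (mem_Nv G |>.mpr (Or.inl h)) hu2
      · exact h
  have hmono := monoA' G hβroot hβmin hsub
  have h3 := (beta_pos G hβroot).le
  nlinarith

lemma walk_bound (hβ1 : β ≤ 1) {t v : V} (p : G.Walk t v) : ∀ (A : Finset V), v ∈ A → t ∉ A →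
    β ^ (p.length + 1) * (P G (A \ Nv G v)).eval β ≤ (P G A).eval β := by
  have hβ0 : 0 < β := beta_pos G hβroot
  induction p with
  | nil =>
    intro A hv ht
    exact absurd hv ht
  | @cons t x v h q IH =>
    intro A hvA htA
    rw [SimpleGraph.Walk.length_cons]
    have hE0 : 0 ≤ (P G (A \ Nv G v)).eval β := nonnegA G hβroot hβmin _
    by_cases hxA : x ∈ A
    · by_cases hxv : x = v
      · subst hxv
        have h1 : β * (P G (A.erase x)).eval β ≤ (P G A).eval β :=
          SL1 G hβroot hβmin htA h hxA
        have h2 : β * (P G (A \ Nv G x)).eval β ≤ (P G (A.erase x)).eval β :=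
          SL2 G hβroot hβmin hxA
        have hpow : β ^ (q.length + 1 + 1) ≤ β ^ 2 := by
          apply pow_le_pow_of_le_one hβ0.le hβ1
          omega
        calc β ^ (q.length + 1 + 1) * (P G (A \ Nv G x)).eval β
            ≤ β ^ 2 * (P G (A \ Nv G x)).eval β := by
              apply mul_le_mul_of_nonneg_right hpow hE0
          _ = β * (β * (P G (A \ Nv G x)).eval β) := by ring
          _ ≤ β * (P G (A.erase x)).eval β := by
              apply mul_le_mul_of_nonneg_left h2 hβ0.le
          _ ≤ (P G A).eval β := h1
      · have h1 : β * (P G (A.erase x)).eval β ≤ (P G A).eval β :=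
          SL1 G hβroot hβmin htA h hxA
        have hvA' : v ∈ A.erase x := Finset.mem_erase.mpr ⟨fun hh => hxv hh.symm, hvA⟩
        have hxA' : x ∉ A.erase x := Finset.notMem_erase x A
        have h2 := IH (A.erase x) hvA' hxA'
        have hsub : (A.erase x) \ Nv G v ⊆ A \ Nv G v := by
          intro u hu
          rw [Finset.mem_sdiff] at hu ⊢
          exact ⟨Finset.mem_of_mem_erase hu.1, hu.2⟩
        have hmono := monoA' G hβroot hβmin hsub
        calc β ^ (q.length + 1 + 1) * (P G (A \ Nv G v)).eval β
            = β * (β ^ (q.length + 1) * (P G (A \ Nv G v)).eval β) := by ring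
          _ ≤ β * (β ^ (q.length + 1) * (P G ((A.erase x) \ Nv G v)).eval β) := by
              apply mul_le_mul_of_nonneg_left _ hβ0.le
              apply mul_le_mul_of_nonneg_left hmono (pow_nonneg hβ0.le _)
          _ ≤ β * (P G (A.erase x)).eval β := by
              apply mul_le_mul_of_nonneg_left h2 hβ0.le
          _ ≤ (P G A).eval β := h1
    · have h2 := IH A hvA hxA
      have hpow : β ^ (q.length + 1 + 1) ≤ β ^ (q.length + 1) := by
        apply pow_le_pow_of_le_one hβ0.le hβ1
        omega
      calc β ^ (q.length + 1 + 1) * (P G (A \ Nv G v)).eval β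
          ≤ β ^ (q.length + 1) * (P G (A \ Nv G v)).eval β :=
            mul_le_mul_of_nonneg_right hpow hE0
        _ ≤ (P G A).eval β := h2

lemma beta_le_one (hne : Nonempty V) : β ≤ 1 := by
  obtain ⟨u⟩ := hne
  by_contra h
  push_neg at h
  have hpos := posA G hβmin ({u} : Finset V) 1 zero_le_one h
  have hSA : SA G ({u} : Finset V) = {∅, ({u} : Finset V)} := by
    ext s
    rw [mem_SA]
    simp only [Finset.subset_singleton_iff, Finset.mem_insert, Finset.mem_singleton]
    constructor
    · rintro ⟨h1, _⟩
      exact h1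
    · rintro (rfl | rfl)
      · exact ⟨Or.inl rfl, fun a ha => by simp at ha⟩
      · refine ⟨Or.inr rfl, ?_⟩
        intro a ha b hb
        rw [Finset.mem_singleton] at ha hb
        rw [ha, hb]
        exact G.irrefl
  rw [evalP_eq, hSA, Finset.sum_pair (Ne.symm (Finset.singleton_ne_empty u))] at hpos
  norm_num at hpos

lemma nbhd_bound (hG : G.Connected) (hβ1 : β ≤ 1) {U : Finset V} (hU : U.Nonempty) {v : V}
    (hv : v ∈ Finset.univ \ NU G U) :
    β ^ G.diam * (P G ((Finset.univ \ NU G U) \ Nv G v)).eval β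
      ≤ (P G (Finset.univ \ NU G U)).eval β := by
  have hβ0 : 0 < β := beta_pos G hβroot
  obtain ⟨u, hu⟩ := hU
  obtain ⟨p, hp⟩ := (hG.preconnected u v).exists_walk_length_eq_dist
  have huNU : u ∈ NU G U := Finset.mem_biUnion.mpr ⟨u, hu, (mem_Nv G).mpr (Or.inl rfl)⟩
  cases p with
  | nil =>
    exfalso
    rw [Finset.mem_sdiff] at hv
    exact hv.2 huNU
  | @cons _ x _ h q =>
    have hxNU : x ∈ NU G U := Finset.mem_biUnion.mpr ⟨u, hu, (mem_Nv G).mpr (Or.inr h)⟩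
    have hxA : x ∉ Finset.univ \ NU G U := by
      rw [Finset.mem_sdiff]
      intro hc
      exact hc.2 hxNU
    have hwb := walk_bound G hβroot hβmin hβ1 q (Finset.univ \ NU G U) hv hxA
    have hlen : q.length + 1 = G.dist u v := by
      simpa [SimpleGraph.Walk.length_cons] using hp
    have hetop : G.ediam ≠ ⊤ := by
      have hne : Nonempty V := hG.nonempty
      obtain ⟨a, b, hab⟩ := SimpleGraph.exists_edist_eq_ediam_of_finite (G := G)
      rw [← hab]
      exact SimpleGraph.edist_ne_top_iff_reachable.mpr (hG.preconnected a b)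
    have hdle : G.dist u v ≤ G.diam := SimpleGraph.dist_le_diam hetop
    have hpow : β ^ G.diam ≤ β ^ (q.length + 1) := by
      apply pow_le_pow_of_le_one hβ0.le hβ1
      omega
    calc β ^ G.diam * (P G ((Finset.univ \ NU G U) \ Nv G v)).eval β
        ≤ β ^ (q.length + 1) * (P G ((Finset.univ \ NU G U) \ Nv G v)).eval β :=
          mul_le_mul_of_nonneg_right hpow (nonnegA G hβroot hβmin _)
      _ ≤ (P G (Finset.univ \ NU G U)).eval β := hwb

lemma Dk (hG : G.Connected) (hβ1 : β ≤ 1) : ∀ (j : ℕ) (U : Finset V), U.Nonempty →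
    β ^ (G.diam * j) * |(Polynomial.derivative^[j] (P G (Finset.univ \ NU G U))).eval β|
      ≤ (j.factorial : ℝ) * (Fintype.card V : ℝ) ^ j
          * (P G (Finset.univ \ NU G U)).eval β := by
  have hβ0 : 0 < β := beta_pos G hβroot
  intro j
  induction j with
  | zero =>
    intro U hU
    simp only [Nat.mul_zero, pow_zero, Function.iterate_zero, id_eq, Nat.factorial_zero,
      Nat.cast_one, one_mul]
    rw [abs_of_nonneg (nonnegA G hβroot hβmin _)]
  | succ j IH =>
    intro U hU
    set A := Finset.univ \ NU G U with hA
    set n := (Fintype.card V : ℝ) with hn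
    have hEA : 0 ≤ (P G A).eval β := nonnegA G hβroot hβmin _
    have hstep : |(Polynomial.derivative^[j + 1] (P G A)).eval β|
        ≤ ∑ v ∈ A, |(Polynomial.derivative^[j] (P G (A \ Nv G v))).eval β| := by
      rw [Function.iterate_succ_apply, deriv_P G A]
      have : Polynomial.derivative^[j] (-∑ v ∈ A, P G (A \ Nv G v))
          = -∑ v ∈ A, Polynomial.derivative^[j] (P G (A \ Nv G v)) := by
        rw [Polynomial.iterate_derivative_neg, Polynomial.iterate_derivative_sum]
      rw [this, eval_neg, abs_neg, eval_finset_sum]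
      exact Finset.abs_sum_le_sum_abs _ _
    have hterm : ∀ v ∈ A, β ^ (G.diam * (j + 1))
          * |(Polynomial.derivative^[j] (P G (A \ Nv G v))).eval β|
        ≤ (j.factorial : ℝ) * n ^ j * (P G A).eval β := by
      intro v hv
      have hset : A \ Nv G v = Finset.univ \ NU G (insert v U) := sdiff_NU_insert G U v
      have hIH := IH (insert v U) (Finset.insert_nonempty v U)
      rw [← hset] at hIH
      have hnb := nbhd_bound G hβroot hβmin hG hβ1 hU hv
      have hfac : (0:ℝ) ≤ (j.factorial : ℝ) * n ^ j := by positivity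
      have habs : (0:ℝ) ≤ |(Polynomial.derivative^[j] (P G (A \ Nv G v))).eval β| := abs_nonneg _
      calc β ^ (G.diam * (j + 1)) * |(Polynomial.derivative^[j] (P G (A \ Nv G v))).eval β|
          = β ^ G.diam * (β ^ (G.diam * j)
              * |(Polynomial.derivative^[j] (P G (A \ Nv G v))).eval β|) := by
            rw [← mul_assoc, ← pow_add]
            ring_nf
        _ ≤ β ^ G.diam * ((j.factorial : ℝ) * n ^ j * (P G (A \ Nv G v)).eval β) := by
            apply mul_le_mul_of_nonneg_left hIH (pow_nonneg hβ0.le _)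
        _ = (j.factorial : ℝ) * n ^ j * (β ^ G.diam * (P G (A \ Nv G v)).eval β) := by ring
        _ ≤ (j.factorial : ℝ) * n ^ j * (P G A).eval β :=
            mul_le_mul_of_nonneg_left hnb hfac
    have hcard : (A.card : ℝ) ≤ n := by
      rw [hn]
      exact_mod_cast Finset.card_le_card (Finset.subset_univ A)
    calc β ^ (G.diam * (j + 1)) * |(Polynomial.derivative^[j + 1] (P G A)).eval β|
        ≤ β ^ (G.diam * (j + 1))
            * ∑ v ∈ A, |(Polynomial.derivative^[j] (P G (A \ Nv G v))).eval β| :=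
          mul_le_mul_of_nonneg_left hstep (pow_nonneg hβ0.le _)
      _ = ∑ v ∈ A, β ^ (G.diam * (j + 1))
            * |(Polynomial.derivative^[j] (P G (A \ Nv G v))).eval β| := by
          rw [Finset.mul_sum]
      _ ≤ ∑ v ∈ A, (j.factorial : ℝ) * n ^ j * (P G A).eval β :=
          Finset.sum_le_sum hterm
      _ = (A.card : ℝ) * ((j.factorial : ℝ) * n ^ j * (P G A).eval β) := by
          rw [Finset.sum_const, nsmul_eq_mul]
      _ ≤ ((j+1).factorial : ℝ) * n ^ (j + 1) * (P G A).eval β := by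
          have h1 : (A.card : ℝ) * ((j.factorial : ℝ) * n ^ j * (P G A).eval β)
              ≤ n * ((j.factorial : ℝ) * n ^ j * (P G A).eval β) := by
            apply mul_le_mul_of_nonneg_right hcard
            positivity
          refine le_trans h1 ?_
          have h2 : n * ((j.factorial : ℝ) * n ^ j * (P G A).eval β)
              = (j.factorial : ℝ) * n ^ (j+1) * (P G A).eval β := by ring
          rw [h2]
          apply mul_le_mul_of_nonneg_right _ hEA
          apply mul_le_mul_of_nonneg_right _ (pow_nonneg (by positivity) _)
          exact_mod_cast Nat.cast_le.mpr (Nat.factorial_le (Nat.le_succ j))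

lemma coeff_taylor_bound (hG : G.Connected) (hβ1 : β ≤ 1) {U : Finset V} (hU : U.Nonempty)
    (i : ℕ) :
    |(taylor β (P G (Finset.univ \ NU G U))).coeff i|
      ≤ (Fintype.card V : ℝ) ^ i * (P G (Finset.univ \ NU G U)).eval β / β ^ (G.diam * i) := by
  have hβ0 : 0 < β := beta_pos G hβroot
  set A := Finset.univ \ NU G U with hA
  set Q := P G A with hQ
  have hDk := Dk G hβroot hβmin hG hβ1 i U hU
  have hfact : ((i.factorial : ℝ)) * |(taylor β Q).coeff i|
      = |(Polynomial.derivative^[i] Q).eval β| := by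
    rw [taylor_coeff]
    have hps : (i.factorial • hasseDeriv i) Q = Polynomial.derivative^[i] Q := by
      rw [congrFun (factorial_smul_hasseDeriv (R := ℝ) i) Q]
    rw [LinearMap.smul_apply] at hps
    rw [← hps]
    have : (i.factorial • hasseDeriv i Q) = ((i.factorial : ℝ[X]) * hasseDeriv i Q) := by
      rw [nsmul_eq_mul]
    rw [this, eval_mul, eval_natCast, abs_mul, Nat.abs_cast]
  have hpowpos : (0:ℝ) < β ^ (G.diam * i) := pow_pos hβ0 _
  rw [le_div_iff₀ hpowpos]
  have hfacpos : (0:ℝ) < (i.factorial : ℝ) := by positivity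
  rw [← mul_le_mul_iff_right₀ hfacpos]
  calc (i.factorial : ℝ) * (|(taylor β Q).coeff i| * β ^ (G.diam * i))
      = β ^ (G.diam * i) * ((i.factorial : ℝ) * |(taylor β Q).coeff i|) := by ring
    _ = β ^ (G.diam * i) * |(Polynomial.derivative^[i] Q).eval β| := by rw [hfact]
    _ ≤ (i.factorial : ℝ) * (Fintype.card V : ℝ) ^ i * Q.eval β := hDk
    _ = (i.factorial : ℝ) * ((Fintype.card V : ℝ) ^ i * Q.eval β) := by ring

lemma complex_bound (hG : G.Connected) (hβ1 : β ≤ 1) {U : Finset V} (hU : U.Nonempty)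
    {r : ℝ} (hr0 : 0 ≤ r) (hr : (Fintype.card V : ℝ) * r ≤ β ^ G.diam / 2)
    {z : ℂ} (hz : ‖z - (β : ℂ)‖ ≤ r) :
    ‖aeval z (P G (Finset.univ \ NU G U))‖
      ≤ 2 * (P G (Finset.univ \ NU G U)).eval β := by
  have hβ0 : 0 < β := beta_pos G hβroot
  set A := Finset.univ \ NU G U with hA
  set Q := P G A with hQ
  set E := Q.eval β with hE
  have hE0 : 0 ≤ E := nonnegA G hβroot hβmin _
  set T := taylor β Q with hT
  have h1 : aeval z Q = aeval (z - (β:ℂ)) T := by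
    rw [hT, taylor_apply, aeval_comp]
    congr 1
    simp
  have h2 : aeval (z - (β:ℂ)) T
      = ∑ i ∈ Finset.range (T.natDegree + 1), T.coeff i • (z - (β:ℂ)) ^ i :=
    aeval_eq_sum_range _
  have h3 : ‖aeval z Q‖
      ≤ ∑ i ∈ Finset.range (T.natDegree + 1), |T.coeff i| * ‖z - (β:ℂ)‖ ^ i := by
    rw [h1, h2]
    refine le_trans (norm_sum_le _ _) ?_
    apply Finset.sum_le_sum
    intro i _
    rw [norm_smul, Real.norm_eq_abs, norm_pow]
  have h4 : ∀ i ∈ Finset.range (T.natDegree + 1),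
      |T.coeff i| * ‖z - (β:ℂ)‖ ^ i ≤ E * (1/2 : ℝ) ^ i := by
    intro i _
    have hc := coeff_taylor_bound G hβroot hβmin hG hβ1 hU i
    rw [← hT, ← hA, ← hE] at hc
    have habs : ‖z - (β:ℂ)‖ ^ i ≤ r ^ i :=
      pow_le_pow_left₀ (norm_nonneg _) hz i
    have hstep : |T.coeff i| * ‖z - (β:ℂ)‖ ^ i
        ≤ ((Fintype.card V : ℝ) ^ i * E / β ^ (G.diam * i)) * r ^ i := by
      apply mul_le_mul hc habs (by positivity) (by positivity)
    refine le_trans hstep ?_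
    have hbpow : (0:ℝ) < β ^ (G.diam * i) := pow_pos hβ0 _
    have hkey : ((Fintype.card V : ℝ) * r) ^ i ≤ (β ^ G.diam / 2) ^ i := by
      apply pow_le_pow_left₀ (by positivity) hr
    have hrw : ((Fintype.card V : ℝ) ^ i * E / β ^ (G.diam * i)) * r ^ i
        = E * (((Fintype.card V : ℝ) * r) ^ i / β ^ (G.diam * i)) := by
      rw [mul_pow]
      ring
    rw [hrw]
    have : ((Fintype.card V : ℝ) * r) ^ i / β ^ (G.diam * i) ≤ (1/2 : ℝ) ^ i := by
      rw [div_le_iff₀ hbpow]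
      calc ((Fintype.card V : ℝ) * r) ^ i ≤ (β ^ G.diam / 2) ^ i := hkey
        _ = (1/2 : ℝ) ^ i * β ^ (G.diam * i) := by
            rw [div_pow, ← pow_mul, one_div, inv_pow]
            ring
    exact mul_le_mul_of_nonneg_left this hE0
  have h5 : (∑ i ∈ Finset.range (T.natDegree + 1), E * (1/2 : ℝ) ^ i) ≤ 2 * E := by
    rw [← Finset.mul_sum]
    have hg := sum_geometric_two_le (T.natDegree + 1)
    have h6 := mul_le_mul_of_nonneg_left hg hE0
    have h7 : E * 2 = 2 * E := by ring
    rw [← h7]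
    exact h6
  exact le_trans h3 (le_trans (Finset.sum_le_sum h4) h5)

end Beta

end IndProof

/-- For a connected graph `G` on `n` vertices, `β := β(G)` and
`r_G := β^{dia(G)}/(2n)`: for every complex `z` with `|z − β| < r_G` one has
`|I'(G,z)| ≤ 2·|I'(G,β)|`. -/
theorem deriv_indPoly_bounded_near_beta {V : Type*} [Fintype V]
    (G : SimpleGraph V) (hG : G.Connected)
    (β : ℝ) (hroot : (indPoly G).eval β = 0)
    (hmin : ∀ x : ℝ, (indPoly G).eval x = 0 → β ≤ x)
    (rG : ℝ) (hrG : rG = β ^ G.diam / (2 * Fintype.card V)) :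
    ∀ z : ℂ, ‖z - (β : ℂ)‖ < rG →
      ‖aeval z (derivative (indPoly G))‖ ≤
        2 * |(derivative (indPoly G)).eval β| := by
  classical
  intro z hz
  have hne : Nonempty V := hG.nonempty
  have hPuniv : indPoly G = IndProof.P G Finset.univ := IndProof.indPoly_eq G
  rw [hPuniv] at hroot hmin ⊢
  have hn0 : 0 < Fintype.card V := Fintype.card_pos
  have hβ0 : 0 < β := IndProof.beta_pos G hroot
  have hβ1 : β ≤ 1 := IndProof.beta_le_one G hroot hmin hne
  have hD : derivative (IndProof.P G Finset.univ)
      = -∑ v ∈ Finset.univ, IndProof.P G (Finset.univ \ IndProof.Nv G v) :=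
    IndProof.deriv_P G _
  have hNU : ∀ v : V, Finset.univ \ IndProof.Nv G v
      = Finset.univ \ IndProof.NU G {v} := by
    intro v
    rw [IndProof.NU, Finset.singleton_biUnion]
  set S := ∑ v ∈ Finset.univ, (IndProof.P G (Finset.univ \ IndProof.Nv G v)).eval β with hSdef
  have hS0 : 0 ≤ S :=
    Finset.sum_nonneg (fun v _ => IndProof.nonnegA G hroot hmin _)
  have hevalD : (derivative (IndProof.P G Finset.univ)).eval β = -S := by
    rw [hD, eval_neg, eval_finset_sum]
  have hrhs : |(derivative (IndProof.P G Finset.univ)).eval β| = S := by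
    rw [hevalD, abs_neg, abs_of_nonneg hS0]
  have hr0 : 0 ≤ rG := by
    rw [hrG]
    positivity
  have hrineq : (Fintype.card V : ℝ) * rG ≤ β ^ G.diam / 2 := by
    rw [hrG]
    have hne' : (Fintype.card V : ℝ) ≠ 0 := by positivity
    have heq : (Fintype.card V : ℝ) * (β ^ G.diam / (2 * (Fintype.card V : ℝ)))
        = β ^ G.diam / 2 := by
      field_simp
    exact le_of_eq heq
  have hperv : ∀ v : V,
      ‖aeval z (IndProof.P G (Finset.univ \ IndProof.Nv G v))‖
        ≤ 2 * (IndProof.P G (Finset.univ \ IndProof.Nv G v)).eval β := by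
    intro v
    rw [hNU v]
    exact IndProof.complex_bound G hroot hmin hG hβ1 (Finset.singleton_nonempty v)
      hr0 hrineq hz.le
  have hDz : aeval z (derivative (IndProof.P G Finset.univ))
      = -∑ v ∈ Finset.univ, aeval z (IndProof.P G (Finset.univ \ IndProof.Nv G v)) := by
    rw [hD, map_neg, map_sum]
  rw [hDz, hrhs, norm_neg]
  calc ‖∑ v ∈ Finset.univ, aeval z (IndProof.P G (Finset.univ \ IndProof.Nv G v))‖
      ≤ ∑ v ∈ Finset.univ,
          ‖aeval z (IndProof.P G (Finset.univ \ IndProof.Nv G v))‖ := norm_sum_le _ _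
    _ ≤ ∑ v ∈ Finset.univ,
          2 * (IndProof.P G (Finset.univ \ IndProof.Nv G v)).eval β := by
        apply Finset.sum_le_sum
        intro v _
        exact hperv v
    _ = 2 * S := by
        rw [hSdef, Finset.mul_sum]
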